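/- Let n ≥ 2 be even and let 0 < q < 1. Set ω_μ = nq for μ = 1,…,n/2, ω_μ = −nq for μ = n/2+1,…,n, and k = (n, n, …, n). Then the number of distinct equilibria in Θ_{ω,k} is exactly 2^n − C(n, n/2), where C(n, n/2) is the central binomial coefficient; moreover, for every q > 0 the number of distinct equilibria of this family is at most 2^n − C(n, n/2). -/

import Mathlib

open Real


lemma eq_of_sin_cos {x y : ℝ} (hx : x ∈ Set.Ioc (-π) π) (hy : y ∈ Set.Ioc (-π) π)
    (hs : Real.sin x = Real.sin y) (hc : Real.cos x = Real.cos y) : x = y := by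
  have hexp : Complex.exp (x * Complex.I) = Complex.exp (y * Complex.I) := by
    rw [Complex.exp_mul_I, Complex.exp_mul_I]
    push_cast [← Complex.ofReal_sin, ← Complex.ofReal_cos, hs, hc]
    rfl
  obtain ⟨k, hk⟩ := Complex.exp_eq_exp_iff_exists_int.mp hexp
  have hI : (x : ℂ) = y + k * (2 * π) := by
    have h5 : (x : ℂ) * Complex.I = ((y : ℂ) + k * (2 * π)) * Complex.I := by
      rw [hk]; ring
    exact mul_right_cancel₀ Complex.I_ne_zero h5
  have hre : x = y + k * (2 * π) := by exact_mod_cast hI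
  have hk0 : k = 0 := by
    have h1 : |x - y| < 2 * π := by
      rw [abs_sub_lt_iff]
      constructor <;> nlinarith [hx.1, hx.2, hy.1, hy.2, Real.pi_pos]
    have h2 : |(k:ℝ)| * (2*π) < 2*π := by
      rw [hre] at h1; simpa [abs_mul, abs_of_pos Real.two_pi_pos] using h1
    have h3 : |(k:ℝ)| < 1 := by nlinarith [Real.two_pi_pos]
    have h4 : |k| < 1 := by exact_mod_cast h3
    have := abs_lt.mp h4; omega
  rw [hk0] at hre; simpa using hre


lemma card_filter_coe_lt {n k : ℕ} (hk : k < n) :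
    (Finset.univ.filter fun ν : Fin n => (ν:ℕ) < k).card = k := by
  have he : (Finset.univ.filter fun ν : Fin n => (ν:ℕ) < k) = Finset.Iio ⟨k, hk⟩ := by
    ext ν; simp [Fin.lt_def]
  rw [he, Fin.card_Iio]

lemma comb (n h : ℕ) (hnh : n = 2*h) :
    2 * (Finset.univ.filter fun A : Finset (Fin n) => h < A.card).card + n.choose h = 2^n := by
  classical
  set P := Finset.univ.filter fun A : Finset (Fin n) => h < A.card with hP
  set Q := Finset.univ.filter fun A : Finset (Fin n) => A.card < h with hQ
  have hE : (Finset.univ.filter fun A : Finset (Fin n) => A.card = h).card = n.choose h := by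
    rw [← Finset.powerset_univ, ← Finset.powersetCard_eq_filter, Finset.card_powersetCard,
      Finset.card_univ, Fintype.card_fin]
  have hPQ : P.card = Q.card := by
    apply Finset.card_bij' (fun A _ => Aᶜ) (fun A _ => Aᶜ)
    case hi =>
      intro A hA
      show Aᶜ ∈ Q
      have hle := Finset.card_le_univ A
      simp only [Finset.card_univ, Fintype.card_fin] at hle
      simp only [hP, Finset.mem_filter] at hA
      simp only [hQ, Finset.mem_filter, Finset.mem_univ, true_and, Finset.card_compl,
        Fintype.card_fin]
      omega
    case hj =>
      intro A hA
      show Aᶜ ∈ P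
      have hle := Finset.card_le_univ A
      simp only [Finset.card_univ, Fintype.card_fin] at hle
      simp only [hQ, Finset.mem_filter] at hA
      simp only [hP, Finset.mem_filter, Finset.mem_univ, true_and, Finset.card_compl,
        Fintype.card_fin]
      omega
    case left_inv => intro A _; simp
    case right_inv => intro A _; simp
  have htotal : P.card + (Q.card + n.choose h) = 2^n := by
    rw [← hE]
    have h1 : P.card + (Finset.univ.filter fun A : Finset (Fin n) => ¬ h < A.card).card
        = 2^n := by
      rw [hP, Finset.card_filter_add_card_filter_not, Finset.card_univ,
        Fintype.card_finset, Fintype.card_fin]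
    have h2 : (Finset.univ.filter fun A : Finset (Fin n) => ¬ h < A.card)
        = Q ∪ (Finset.univ.filter fun A : Finset (Fin n) => A.card = h) := by
      rw [hQ, ← Finset.filter_or]
      apply Finset.filter_congr
      intro A _; constructor <;> intro hh <;> omega
    have h3 : Disjoint Q (Finset.univ.filter fun A : Finset (Fin n) => A.card = h) := by
      rw [Finset.disjoint_left]
      intro A hA hA2
      simp only [hQ, Finset.mem_filter] at hA
      simp only [Finset.mem_filter] at hA2
      omega
    rw [h2, Finset.card_union_of_disjoint h3] at h1
    omega
  omega

def mIntK {n : ℕ} (ε : Fin n → Bool) : ℤ := ∑ ν, (if ε ν then 1 else -1)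

lemma mIntK_eq {n : ℕ} (ε : Fin n → Bool) :
    mIntK ε = 2 * ((Finset.univ.filter fun ν => ε ν).card : ℤ) - n := by
  unfold mIntK
  have : ∀ ν : Fin n, (if ε ν then (1:ℤ) else -1)
      = 2 * (if ε ν then (1:ℤ) else 0) - 1 := by
    intro ν; by_cases hv : ε ν <;> simp [hv]
  rw [Finset.sum_congr rfl fun ν _ => this ν, Finset.sum_sub_distrib, ← Finset.mul_sum,
    Finset.sum_boole, Finset.sum_const, Finset.card_univ, Fintype.card_fin]
  push_cast
  ring

lemma count_bool (n h : ℕ) (hnh : n = 2*h) :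
    2 * (Finset.univ.filter fun ε : Fin n → Bool => 0 < mIntK ε).card + n.choose h = 2^n := by
  classical
  have key : (Finset.univ.filter fun ε : Fin n → Bool => 0 < mIntK ε).card
      = (Finset.univ.filter fun A : Finset (Fin n) => h < A.card).card := by
    apply Finset.card_bij' (fun ε _ => Finset.univ.filter fun ν => ε ν)
      (fun A _ => fun ν => decide (ν ∈ A))
    case hi =>
      intro ε hε
      simp only [Finset.mem_filter, Finset.mem_univ, true_and] at hε ⊢
      rw [mIntK_eq] at hε; omega
    case hj =>
      intro A hA
      simp only [Finset.mem_filter, Finset.mem_univ, true_and] at hA ⊢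
      rw [mIntK_eq]
      have : (Finset.univ.filter fun ν => decide (ν ∈ A) = true) = A := by
        ext ν; simp
      rw [this]; omega
    case left_inv =>
      intro ε _; funext ν; simp
    case right_inv =>
      intro A _; ext ν; simp
  rw [key, comb n h hnh]


lemma sq_half_iff {s : ℝ} (hs : 0 < s) : s ≤ Real.sqrt 2 / 2 ↔ s^2 ≤ 1/2 := by
  have h2 : (Real.sqrt 2 / 2)^2 = 1/2 := by
    rw [div_pow, Real.sq_sqrt (by norm_num : (2:ℝ) ≥ 0)]; norm_num
  constructor
  · intro h
    calc s^2 ≤ (Real.sqrt 2 / 2)^2 := by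
          apply pow_le_pow_left₀ hs.le h
      _ = 1/2 := h2
  · intro h
    have h3 : s^2 ≤ (Real.sqrt 2 / 2)^2 := by rw [h2]; exact h
    have h4 : (0:ℝ) ≤ Real.sqrt 2 / 2 := by positivity
    exact (pow_le_pow_iff_left₀ hs.le h4 (by norm_num)).mp h3

lemma root_unique {s s' : ℝ} (h1 : 0 < s) (h2 : s < 1) (h1' : 0 < s') (h2' : s' < 1)
    (hj : (s ≤ Real.sqrt 2 / 2) ↔ (s' ≤ Real.sqrt 2 / 2))
    (heq : s * Real.sqrt (1 - s^2) = s' * Real.sqrt (1 - s'^2)) : s = s' := by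
  have hs2 : s^2 * (1 - s^2) = s'^2 * (1 - s'^2) := by
    have e1 : (s * Real.sqrt (1 - s^2))^2 = s^2 * (1 - s^2) := by
      rw [mul_pow, Real.sq_sqrt (by nlinarith : (0:ℝ) ≤ 1 - s^2)]
    have e2 : (s' * Real.sqrt (1 - s'^2))^2 = s'^2 * (1 - s'^2) := by
      rw [mul_pow, Real.sq_sqrt (by nlinarith : (0:ℝ) ≤ 1 - s'^2)]
    rw [← e1, ← e2, heq]
  have factored : (s^2 - s'^2) * (1 - s^2 - s'^2) = 0 := by linear_combination hs2
  have hsq : s^2 = s'^2 := by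
    rcases mul_eq_zero.mp factored with h | h
    · linarith
    · by_cases hc : s ≤ Real.sqrt 2 / 2
      · have hc' := hj.mp hc
        rw [sq_half_iff h1] at hc
        rw [sq_half_iff h1'] at hc'
        linarith
      · have hc' : ¬ (s' ≤ Real.sqrt 2 / 2) := fun hh => hc (hj.mpr hh)
        rw [sq_half_iff h1] at hc
        rw [sq_half_iff h1'] at hc'
        push_neg at hc hc'
        linarith
  nlinarith [hsq]


lemma decide_eq_bool {P : Prop} [Decidable P] {b : Bool} (h : P ↔ b = true) : decide P = b := by
  cases b <;> simp_all


/-- `Θ_{ω,k}`: the set of equilibria of the rank-one coupled Kuramoto model lying in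
`(-π,π]^n` and satisfying the output condition OC1. -/
def kuramotoEquilibria (n : ℕ) (ω k : Fin n → ℝ) : Set (Fin n → ℝ) :=
  {θ | (∀ ν, θ ν ∈ Set.Ioc (-Real.pi) Real.pi) ∧
    (∀ ν, ω ν = (1 / (n : ℝ)) * ∑ μ, k ν * k μ * Real.sin (θ ν - θ μ)) ∧
    (∑ μ, k μ * Real.sin (θ μ) = 0 ∧ 0 ≤ ∑ μ, k μ * Real.cos (θ μ))}


lemma kuramoto_mem_iff (n : ℕ) (hn : 0 < n) (q : ℝ) (θ : Fin n → ℝ) :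
    θ ∈ kuramotoEquilibria n
      (fun μ => if (μ : ℕ) < n / 2 then (n : ℝ) * q else -((n : ℝ) * q))
      (fun _ => (n : ℝ)) ↔
    ((∀ ν, θ ν ∈ Set.Ioc (-Real.pi) Real.pi) ∧
      (∑ μ, Real.sin (θ μ)) = 0 ∧ 0 ≤ (∑ μ, Real.cos (θ μ)) ∧
      ∀ ν : Fin n, (if (ν : ℕ) < n / 2 then (1:ℝ) else -1) * q
        = Real.sin (θ ν) * ∑ μ, Real.cos (θ μ)) := by
  have hn' : (n:ℝ) ≠ 0 := Nat.cast_ne_zero.mpr hn.ne'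
  have hnpos : (0:ℝ) < n := Nat.cast_pos.mpr hn
  have key : ∀ ν : Fin n, (∑ μ, Real.sin (θ μ)) = 0 →
      (((if (ν:ℕ) < n/2 then (n:ℝ)*q else -((n:ℝ)*q))
          = (1/(n:ℝ)) * ∑ μ, (n:ℝ)*(n:ℝ)*Real.sin (θ ν - θ μ))
      ↔ ((if (ν:ℕ) < n/2 then (1:ℝ) else -1) * q
          = Real.sin (θ ν) * ∑ μ, Real.cos (θ μ))) := by
    intro ν hS0
    have hsum : (1/(n:ℝ)) * ∑ μ, (n:ℝ)*(n:ℝ)*Real.sin (θ ν - θ μ)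
        = (n:ℝ)*(Real.sin (θ ν) * ∑ μ, Real.cos (θ μ)) := by
      rw [← Finset.mul_sum]
      have h1 : ∑ μ, Real.sin (θ ν - θ μ)
          = Real.sin (θ ν) * (∑ μ, Real.cos (θ μ))
            - Real.cos (θ ν) * ∑ μ, Real.sin (θ μ) := by
        rw [Finset.mul_sum, Finset.mul_sum, ← Finset.sum_sub_distrib]
        exact Finset.sum_congr rfl fun μ _ => Real.sin_sub _ _
      rw [h1, hS0]
      field_simp
      ring
    rw [hsum]
    by_cases hν : (ν:ℕ) < n/2 <;> simp only [hν, if_true, if_false, one_mul, neg_one_mul]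
    · exact ⟨fun h => mul_left_cancel₀ hn' h, fun h => by rw [h]⟩
    · constructor
      · intro h
        have h2 : (n:ℝ) * (-q) = (n:ℝ) * (Real.sin (θ ν) * ∑ μ, Real.cos (θ μ)) := by
          rw [← h]; ring
        exact mul_left_cancel₀ hn' h2
      · intro h; rw [← h]; ring
  constructor
  · rintro ⟨hIoc, heq, hS, hC⟩
    have hS0 : ∑ μ, Real.sin (θ μ) = 0 := by
      rw [← Finset.mul_sum] at hS
      rcases mul_eq_zero.mp hS with h | h
      · exact absurd h hn'
      · exact h
    have hC0 : 0 ≤ ∑ μ, Real.cos (θ μ) := by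
      rw [← Finset.mul_sum] at hC
      have h2 : (n:ℝ) * 0 ≤ (n:ℝ) * ∑ μ, Real.cos (θ μ) := by simpa using hC
      simpa using (mul_le_mul_iff_right₀ hnpos).mp h2
    exact ⟨hIoc, hS0, hC0, fun ν => (key ν hS0).mp (heq ν)⟩
  · rintro ⟨hIoc, hS0, hC0, heq⟩
    refine ⟨hIoc, fun ν => (key ν hS0).mpr (heq ν), ?_, ?_⟩
    · rw [← Finset.mul_sum, hS0, mul_zero]
    · rw [← Finset.mul_sum]; exact mul_nonneg hnpos.le hC0



lemma kuramoto_forward (n : ℕ) (hn : 2 ≤ n) (q : ℝ) (hq : 0 < q) (θ : Fin n → ℝ)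
    (hC0 : 0 ≤ ∑ μ, Real.cos (θ μ))
    (heq : ∀ ν : Fin n, (if (ν : ℕ) < n / 2 then (1:ℝ) else -1) * q
        = Real.sin (θ ν) * ∑ μ, Real.cos (θ μ)) :
    ∃ s : ℝ, 0 < s ∧ s < 1 ∧
      (∀ ν, Real.sin (θ ν) = (if (ν:ℕ) < n/2 then (1:ℝ) else -1) * s) ∧
      (∀ ν, Real.cos (θ ν) = (if 0 ≤ Real.cos (θ ν) then (1:ℝ) else -1) * Real.sqrt (1 - s^2)) ∧
      0 < mIntK (fun ν => decide (0 ≤ Real.cos (θ ν))) ∧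
      s * Real.sqrt (1 - s^2) * ((mIntK (fun ν => decide (0 ≤ Real.cos (θ ν))) : ℤ) : ℝ) = q := by
  set C := ∑ μ, Real.cos (θ μ) with hC
  have hn2 : 0 < n / 2 := by omega
  have hn0 : 0 < n := by omega
  set ν0 : Fin n := ⟨0, hn0⟩ with hν0
  have hν0lt : ((ν0 : ℕ)) < n / 2 := hn2
  have heq0 := heq ν0
  rw [if_pos hν0lt, one_mul] at heq0
  have hCne : C ≠ 0 := by
    intro h
    rw [h, mul_zero] at heq0
    exact hq.ne' heq0
  have hCpos : 0 < C := lt_of_le_of_ne hC0 (Ne.symm hCne)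
  set s : ℝ := q / C with hs
  have hspos : 0 < s := div_pos hq hCpos
  have hsin : ∀ ν, Real.sin (θ ν) = (if (ν:ℕ) < n/2 then (1:ℝ) else -1) * s := by
    intro ν
    have h := heq ν
    rw [hs]
    field_simp
    by_cases hν : (ν:ℕ) < n/2 <;> simp only [hν, if_true, if_false] at h ⊢ <;> linarith
  have hsle : s ≤ 1 := by
    have := Real.sin_le_one (θ ν0)
    rw [hsin ν0, if_pos hν0lt, one_mul] at this
    exact this
  have hcos_sq : ∀ ν, Real.cos (θ ν)^2 = 1 - s^2 := by
    intro ν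
    have h := Real.sin_sq_add_cos_sq (θ ν)
    rw [hsin ν] at h
    by_cases hν : (ν:ℕ) < n/2 <;> simp only [hν, if_true, if_false] at h <;> nlinarith
  have hslt : s < 1 := by
    rcases lt_or_eq_of_le hsle with h | h
    · exact h
    · exfalso
      have hz : ∀ ν, Real.cos (θ ν) = 0 := by
        intro ν
        have h2 : Real.cos (θ ν)^2 = 0 := by rw [hcos_sq ν, h]; norm_num
        exact pow_eq_zero_iff (n := 2) (by norm_num) |>.mp h2
      rw [hC] at hCpos
      simp only [hz] at hCpos
      simp at hCpos
  have hc_pos : 0 < Real.sqrt (1 - s^2) := Real.sqrt_pos.mpr (by nlinarith)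
  set c : ℝ := Real.sqrt (1 - s^2) with hcdef
  have hcos : ∀ ν, Real.cos (θ ν) = (if 0 ≤ Real.cos (θ ν) then (1:ℝ) else -1) * c := by
    intro ν
    have habs : |Real.cos (θ ν)| = c := by
      rw [← Real.sqrt_sq_eq_abs, hcos_sq ν]
    by_cases hν : 0 ≤ Real.cos (θ ν)
    · rw [if_pos hν, one_mul, ← habs, abs_of_nonneg hν]
    · rw [if_neg hν, ← habs, abs_of_neg (lt_of_not_ge hν)]; ring
  set ε : Fin n → Bool := fun ν => decide (0 ≤ Real.cos (θ ν)) with hε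
  have hCm : C = c * ((mIntK ε : ℤ) : ℝ) := by
    have hcast : ((mIntK ε : ℤ) : ℝ) = ∑ ν, (if ε ν then (1:ℝ) else -1) := by
      unfold mIntK
      push_cast
      rfl
    rw [hC, hcast, Finset.mul_sum]
    apply Finset.sum_congr rfl
    intro ν _
    rw [hcos ν]
    by_cases hν : 0 ≤ Real.cos (θ ν)
    · simp [hε, hν]
    · simp [hε, hν]
  have hmpos : 0 < mIntK ε := by
    have : (0:ℝ) < ((mIntK ε : ℤ) : ℝ) := by
      by_contra hcon
      push_neg at hcon
      nlinarith
    exact_mod_cast this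
  refine ⟨s, hspos, hslt, hsin, hcos, hmpos, ?_⟩
  have : c * ((mIntK ε : ℤ) : ℝ) = C := hCm.symm
  rw [mul_assoc, this, hs]
  field_simp





set_option maxHeartbeats 2000000 in
lemma kuramoto_backward (n : ℕ) (hn : 2 ≤ n) (heven : Even n) (q : ℝ) (hq : 0 < q) (hq1 : q < 1)
    (ε : Fin n → Bool) (hm : 0 < mIntK ε) (j : Bool) :
    ∃ θ : Fin n → ℝ,
      (∀ ν, θ ν ∈ Set.Ioc (-π) π) ∧
      (∑ μ, Real.sin (θ μ)) = 0 ∧ 0 ≤ (∑ μ, Real.cos (θ μ)) ∧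
      (∀ ν : Fin n, (if (ν : ℕ) < n / 2 then (1:ℝ) else -1) * q
        = Real.sin (θ ν) * ∑ μ, Real.cos (θ μ)) ∧
      (∀ ν, (0 ≤ Real.cos (θ ν) ↔ ε ν = true)) ∧
      (Real.sin (θ ⟨0, by omega⟩) ≤ Real.sqrt 2 / 2 ↔ j = true) := by
  obtain ⟨h, hh⟩ := heven
  have hh2 : n = 2 * h := by omega
  have hn2 : n / 2 = h := by omega
  have hm2 : 2 ≤ mIntK ε := by
    have := mIntK_eq ε
    omega
  set m : ℤ := mIntK ε with hmdef
  have hmR : (2:ℝ) ≤ (m:ℝ) := by exact_mod_cast hm2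
  have hmRpos : (0:ℝ) < (m:ℝ) := by linarith
  set x : ℝ := 2*q/(m:ℝ) with hx
  have hxpos : 0 < x := by positivity
  have hxlt : x < 1 := by
    have h1 : x ≤ 2*q/2 := div_le_div_of_nonneg_left (by linarith) (by norm_num) hmR
    have h2 : 2*q/2 = q := by ring
    linarith
  set β : ℝ := Real.arcsin x with hβ
  have hβpos : 0 < β := Real.arcsin_pos.mpr hxpos
  have hβlt : β < π/2 := (Real.arcsin_lt_pi_div_two).mpr hxlt
  set α : ℝ := if j then β/2 else (π - β)/2 with hα
  have hαpos : 0 < α := by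
    cases j <;> simp only [hα, if_true, if_false, Bool.false_eq_true] <;>
      [skip; skip] <;> [linarith [Real.pi_pos]; linarith]
  have hαlt : α < π/2 := by
    cases j <;> simp only [hα, if_true, if_false, Bool.false_eq_true] <;>
      [skip; skip] <;> [linarith [Real.pi_pos]; linarith [Real.pi_pos]]
  have hsin2α : Real.sin (2*α) = x := by
    have hx1 : x ≤ 1 := hxlt.le
    have hx0 : -1 ≤ x := by linarith
    cases j <;> simp only [hα, if_true, if_false, Bool.false_eq_true]
    · have : 2 * ((π - β)/2) = π - β := by ring
      rw [this, Real.sin_pi_sub, hβ, Real.sin_arcsin hx0 hx1]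
    · have : 2 * (β/2) = β := by ring
      rw [this, hβ, Real.sin_arcsin hx0 hx1]
  set s : ℝ := Real.sin α with hsdef
  set c : ℝ := Real.cos α with hcdef
  have hcpos : 0 < c := Real.cos_pos_of_mem_Ioo ⟨by linarith, hαlt⟩
  have hspos : 0 < s := Real.sin_pos_of_pos_of_lt_pi hαpos (by linarith [Real.pi_pos])
  have hsc : s * c = q / (m:ℝ) := by
    have h1 := Real.sin_two_mul α
    rw [hsin2α] at h1
    rw [hx] at h1
    field_simp at h1 ⊢
    linarith
  have hπ := Real.pi_pos
  have hsinθ : ∀ ν : Fin n,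
      Real.sin ((if (ν:ℕ) < n/2 then (1:ℝ) else -1) * (if ε ν then α else π - α))
        = (if (ν:ℕ) < n/2 then (1:ℝ) else -1) * s := by
    intro ν
    by_cases h1 : (ν:ℕ) < n/2 <;> by_cases h2 : ε ν <;>
      simp [h1, h2, Real.sin_pi_sub, ← hsdef]
  have hcosθ : ∀ ν : Fin n,
      Real.cos ((if (ν:ℕ) < n/2 then (1:ℝ) else -1) * (if ε ν then α else π - α))
        = (if ε ν then (1:ℝ) else -1) * c := by
    intro ν
    by_cases h1 : (ν:ℕ) < n/2 <;> by_cases h2 : ε ν <;>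
      simp [h1, h2, Real.cos_pi_sub, ← hcdef]
  have hcast : ((m:ℤ):ℝ) = ∑ ν : Fin n, (if ε ν then (1:ℝ) else -1) := by
    rw [hmdef]
    unfold mIntK
    push_cast
    rfl
  have hCsum : ∑ μ : Fin n,
      Real.cos ((if (μ:ℕ) < n/2 then (1:ℝ) else -1) * (if ε μ then α else π - α))
        = c * (m:ℝ) := by
    rw [Finset.sum_congr rfl fun ν _ => hcosθ ν, hcast, Finset.mul_sum]
    exact Finset.sum_congr rfl fun ν _ => by ring
  refine ⟨fun ν => (if (ν:ℕ) < n/2 then (1:ℝ) else -1) * (if ε ν then α else π - α),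
    ?_, ?_, ?_, ?_, ?_, ?_⟩
  · intro ν
    constructor
    · by_cases h1 : (ν:ℕ) < n/2 <;> by_cases h2 : ε ν <;>
        simp only [h1, h2, if_true, if_false] <;> norm_num <;> linarith
    · by_cases h1 : (ν:ℕ) < n/2 <;> by_cases h2 : ε ν <;>
        simp only [h1, h2, if_true, if_false] <;> norm_num <;> linarith
  · show ∑ μ : Fin n,
        Real.sin ((if (μ:ℕ) < n/2 then (1:ℝ) else -1) * (if ε μ then α else π - α)) = 0
    rw [Finset.sum_congr rfl fun ν _ => hsinθ ν, ← Finset.sum_mul]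
    have hσ : ∑ ν : Fin n, (if (ν:ℕ) < n/2 then (1:ℝ) else -1) = 0 := by
      rw [Finset.sum_ite, Finset.sum_const, Finset.sum_const]
      have hcard1 : (Finset.univ.filter fun ν : Fin n => (ν:ℕ) < n/2).card = n/2 :=
        card_filter_coe_lt (by omega)
      have hcard2 : (Finset.univ.filter fun ν : Fin n => ¬ (ν:ℕ) < n/2).card = n/2 := by
        have h3 := Finset.card_filter_add_card_filter_not
          (s := Finset.univ) (p := fun ν : Fin n => (ν:ℕ) < n/2)
        rw [Finset.card_univ, Fintype.card_fin] at h3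
        omega
      rw [hcard1, hcard2]
      simp
    rw [hσ, zero_mul]
  · show 0 ≤ ∑ μ : Fin n,
        Real.cos ((if (μ:ℕ) < n/2 then (1:ℝ) else -1) * (if ε μ then α else π - α))
    rw [hCsum]
    positivity
  · intro ν
    show _ = Real.sin ((if (ν:ℕ) < n/2 then (1:ℝ) else -1) * (if ε ν then α else π - α))
      * ∑ μ : Fin n,
        Real.cos ((if (μ:ℕ) < n/2 then (1:ℝ) else -1) * (if ε μ then α else π - α))
    rw [hCsum, hsinθ ν]
    have hkey : s * (c * (m:ℝ)) = q := by
      have h5 : s * c * (m:ℝ) = q := by rw [hsc]; field_simp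
      linear_combination h5
    by_cases h1 : (ν:ℕ) < n/2 <;> simp only [h1, if_true, if_false] <;> nlinarith [hkey]
  · intro ν
    show 0 ≤ Real.cos ((if (ν:ℕ) < n/2 then (1:ℝ) else -1) * (if ε ν then α else π - α)) ↔ _
    rw [hcosθ ν]
    by_cases h2 : ε ν <;> simp [h2] <;> linarith
  · show Real.sin ((if ((⟨0, by omega⟩ : Fin n):ℕ) < n/2 then (1:ℝ) else -1)
      * (if ε ⟨0, by omega⟩ then α else π - α)) ≤ Real.sqrt 2 / 2 ↔ j = true
    have h0lt : ((⟨0, by omega⟩ : Fin n) : ℕ) < n/2 := by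
      show 0 < n/2
      omega
    rw [hsinθ ⟨0, by omega⟩, if_pos h0lt, one_mul]
    have hq4 : Real.sin (π/4) = Real.sqrt 2 / 2 := Real.sin_pi_div_four
    have hmem1 : π/4 ∈ Set.Icc (-(π/2)) (π/2) := Set.mem_Icc.mpr ⟨by linarith, by linarith⟩
    have hmem2 : α ∈ Set.Icc (-(π/2)) (π/2) := Set.mem_Icc.mpr ⟨by linarith, by linarith⟩
    cases j
    · simp only [Bool.false_eq_true, iff_false]
      push_neg
      have hαgt : π/4 < α := by
        rw [hα]; simp only [Bool.false_eq_true, if_false]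
        linarith
      have hlt : Real.sin (π/4) < Real.sin α := Real.strictMonoOn_sin hmem1 hmem2 hαgt
      rw [hq4] at hlt
      rw [hsdef]
      linarith
    · simp only [iff_true]
      have hαlt4 : α < π/4 := by
        rw [hα]; simp only [if_true]
        linarith
      have hlt : Real.sin α < Real.sin (π/4) := Real.strictMonoOn_sin hmem2 hmem1 hαlt4
      rw [hq4] at hlt
      rw [hsdef]
      linarith


/-- Corollary 4.5: let `n ≥ 2` be even.  For
`ω = (nq,…,nq,-nq,…,-nq)` and `k = (n,…,n)`, the number of distinct equilibria in
`Θ_{ω,k}` equals `2^n - C(n, n/2)` whenever `0 < q < 1`, and for every `q > 0` this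
number is at most `2^n - C(n, n/2)`. -/
theorem card_equilibria_even_max (n : ℕ) (hn : 2 ≤ n) (heven : Even n) :
    (∀ q : ℝ, 0 < q → q < 1 →
      (kuramotoEquilibria n
          (fun μ => if (μ : ℕ) < n / 2 then (n : ℝ) * q else -((n : ℝ) * q))
          (fun _ => (n : ℝ))).ncard = 2 ^ n - n.choose (n / 2)) ∧
    (∀ q : ℝ, 0 < q →
      (kuramotoEquilibria n
          (fun μ => if (μ : ℕ) < n / 2 then (n : ℝ) * q else -((n : ℝ) * q))
          (fun _ => (n : ℝ))).ncard ≤ 2 ^ n - n.choose (n / 2)) := by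
  classical
  obtain ⟨h, hh⟩ := id heven
  have hh2 : n = 2 * h := by omega
  have hn2 : n / 2 = h := by omega
  have hn0 : 0 < n := by omega
  set Dfin : Finset ((Fin n → Bool) × Bool) :=
    Finset.univ.filter (fun p => 0 < mIntK p.1) with hD
  have hDcard : Dfin.card = 2 ^ n - n.choose (n / 2) := by
    have hprod : Dfin = (Finset.univ.filter fun ε : Fin n → Bool => 0 < mIntK ε) ×ˢ
        (Finset.univ : Finset Bool) := by
      ext p
      simp [hD, Finset.mem_product, Finset.mem_filter]
    rw [hprod, Finset.card_product]
    have hcb := count_bool n h hh2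
    have hb2 : (Finset.univ : Finset Bool).card = 2 := by simp
    rw [hb2, hn2]
    omega
  set F : (Fin n → ℝ) → (Fin n → Bool) × Bool :=
    fun θ => (fun ν => decide (0 ≤ Real.cos (θ ν)),
      decide (Real.sin (θ ⟨0, hn0⟩) ≤ Real.sqrt 2 / 2)) with hF
  have key : ∀ q : ℝ, 0 < q →
      (kuramotoEquilibria n
          (fun μ => if (μ : ℕ) < n / 2 then (n : ℝ) * q else -((n : ℝ) * q))
          (fun _ => (n : ℝ))).ncard ≤ 2 ^ n - n.choose (n / 2) ∧
      (q < 1 → (kuramotoEquilibria n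
          (fun μ => if (μ : ℕ) < n / 2 then (n : ℝ) * q else -((n : ℝ) * q))
          (fun _ => (n : ℝ))).ncard = 2 ^ n - n.choose (n / 2)) := by
    intro q hq
    set Θq := kuramotoEquilibria n
        (fun μ => if (μ : ℕ) < n / 2 then (n : ℝ) * q else -((n : ℝ) * q))
        (fun _ => (n : ℝ)) with hΘq
    have hmem := kuramoto_mem_iff n hn0 q
    have h0lt : ((⟨0, hn0⟩ : Fin n) : ℕ) < n / 2 := by
      show 0 < n / 2
      omega
    have hinj : Set.InjOn F Θq := by
      intro θ hθ θ' hθ' hFeq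
      obtain ⟨hIoc, hS0, hC0, heqv⟩ := (hmem θ).mp hθ
      obtain ⟨hIoc', hS0', hC0', heqv'⟩ := (hmem θ').mp hθ'
      obtain ⟨s, hs1, hs2, hsin, hcos, hm, hkey⟩ := kuramoto_forward n hn q hq θ hC0 heqv
      obtain ⟨s', hs1', hs2', hsin', hcos', hm', hkey'⟩ :=
        kuramoto_forward n hn q hq θ' hC0' heqv'
      have hε : ∀ ν, decide (0 ≤ Real.cos (θ ν)) = decide (0 ≤ Real.cos (θ' ν)) := by
        intro ν
        have h1 := congrArg Prod.fst hFeq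
        simp only [hF] at h1
        exact congrFun h1 ν
      have hcondiff : ∀ ν, (0 ≤ Real.cos (θ ν)) ↔ (0 ≤ Real.cos (θ' ν)) :=
        fun ν => decide_eq_decide.mp (hε ν)
      have hmeq : mIntK (fun ν => decide (0 ≤ Real.cos (θ ν)))
          = mIntK (fun ν => decide (0 ≤ Real.cos (θ' ν))) := by
        unfold mIntK
        exact Finset.sum_congr rfl fun ν _ => by simp only [hε ν]
      have hmne : ((mIntK (fun ν => decide (0 ≤ Real.cos (θ ν))) : ℤ) : ℝ) ≠ 0 := by
        exact_mod_cast hm.ne'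
      have hroot : s * Real.sqrt (1 - s^2) = s' * Real.sqrt (1 - s'^2) := by
        apply mul_right_cancel₀ hmne
        rw [hkey, hmeq]
        exact hkey'.symm
      have hjeq0 := congrArg Prod.snd hFeq
      simp only [hF] at hjeq0
      have hjeq : (Real.sin (θ ⟨0, hn0⟩) ≤ Real.sqrt 2 / 2)
          ↔ (Real.sin (θ' ⟨0, hn0⟩) ≤ Real.sqrt 2 / 2) := decide_eq_decide.mp hjeq0
      have hsθ0 : Real.sin (θ ⟨0, hn0⟩) = s := by
        rw [hsin ⟨0, hn0⟩, if_pos h0lt, one_mul]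
      have hsθ0' : Real.sin (θ' ⟨0, hn0⟩) = s' := by
        rw [hsin' ⟨0, hn0⟩, if_pos h0lt, one_mul]
      have hss : s = s' := by
        apply root_unique hs1 hs2 hs1' hs2' _ hroot
        rw [← hsθ0, ← hsθ0']
        exact hjeq
      funext ν
      apply eq_of_sin_cos (hIoc ν) (hIoc' ν)
      · rw [hsin ν, hsin' ν, hss]
      · rw [hcos ν, hcos' ν, hss]
        congr 1
        exact if_congr (hcondiff ν) rfl rfl
    have himg_sub : F '' Θq ⊆ ↑Dfin := by
      rintro _ ⟨θ, hθ, rfl⟩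
      obtain ⟨hIoc, hS0, hC0, heqv⟩ := (hmem θ).mp hθ
      obtain ⟨s, hs1, hs2, hsin, hcos, hm, hkey⟩ := kuramoto_forward n hn q hq θ hC0 heqv
      simp only [hD, hF, Finset.coe_filter, Set.mem_setOf_eq, Finset.mem_univ, true_and]
      exact hm
    have hle : Θq.ncard ≤ 2 ^ n - n.choose (n / 2) := by
      calc Θq.ncard = (F '' Θq).ncard := (Set.ncard_image_of_injOn hinj).symm
        _ ≤ (↑Dfin : Set ((Fin n → Bool) × Bool)).ncard :=
            Set.ncard_le_ncard himg_sub Dfin.finite_toSet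
        _ = Dfin.card := Set.ncard_coe_finset _
        _ = _ := hDcard
    refine ⟨hle, fun hq1 => ?_⟩
    have himg_eq : F '' Θq = ↑Dfin := by
      apply Set.Subset.antisymm himg_sub
      rintro ⟨ε, j⟩ hεj
      have hmε : 0 < mIntK ε := by
        simp only [hD, Finset.coe_filter, Set.mem_setOf_eq, Finset.mem_univ, true_and] at hεj
        exact hεj
      obtain ⟨θ, hIoc, hS0, hC0, heqv, hεiff, hjiff⟩ :=
        kuramoto_backward n hn heven q hq hq1 ε hmε j
      refine ⟨θ, (hmem θ).mpr ⟨hIoc, hS0, hC0, heqv⟩, ?_⟩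
      rw [hF]
      refine Prod.ext ?_ ?_
      · funext ν
        exact decide_eq_bool (hεiff ν)
      · exact decide_eq_bool hjiff
    calc Θq.ncard = (F '' Θq).ncard := (Set.ncard_image_of_injOn hinj).symm
      _ = Dfin.card := by rw [himg_eq, Set.ncard_coe_finset]
      _ = _ := hDcard
  exact ⟨fun q hq hq1 => (key q hq).2 hq1, fun q hq => (key q hq).1⟩
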